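/- Let X be a finite set, P a probability distribution on X with full support, and L : X → ℕ a length function satisfying the Kraft inequality ∑_{x∈X} 2^{-L(x)} ≤ 1. Then for any ρ > 0 and α = 1/(1+ρ), (1/ρ) · log(∑_{x∈X} P(x) · 2^{ρ·L(x)}) ≥ H_α(P), where H_α(P) = (1/(1-α)) log ∑_x P(x)^α. -/

import Mathlib

open Real Finset

theorem stmt6 {X : Type*} [Fintype X]
    (P : X → ℝ) (hP : ∀ x, 0 < P x) (hPsum : ∑ x, P x = 1)
    (L : X → ℕ) (hKraft : ∑ x, (2 : ℝ) ^ (-(L x : ℝ)) ≤ 1)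
    (ρ : ℝ) (hρ : 0 < ρ) (α : ℝ) (hα : α = 1 / (1 + ρ)) :
    (1 / ρ) * Real.logb 2 (∑ x, P x * (2 : ℝ) ^ (ρ * (L x : ℝ))) ≥
      (1 / (1 - α)) * Real.logb 2 (∑ x, P x ^ α) := by
  have h1ρ : (0:ℝ) < 1 + ρ := by linarith
  have hα0 : 0 < α := by rw [hα]; positivity
  have hα1 : α < 1 := by rw [hα]; rw [div_lt_one h1ρ]; linarith
  have h1α : 0 < 1 - α := by linarith
  -- nonemptiness
  have hne : Nonempty X := by
    by_contra h
    rw [not_nonempty_iff] at h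
    simp at hPsum
  set S : ℝ := ∑ x, P x * (2 : ℝ) ^ (ρ * (L x : ℝ)) with hS
  have hposx : ∀ x : X, 0 < P x * (2 : ℝ) ^ (ρ * (L x : ℝ)) := fun x =>
    mul_pos (hP x) (Real.rpow_pos_of_pos two_pos _)
  have hSpos : 0 < S :=
    Finset.sum_pos (fun x _ => hposx x) univ_nonempty
  have hTpos : 0 < ∑ x, P x ^ α := by
    apply Finset.sum_pos
    · intro x _; exact Real.rpow_pos_of_pos (hP x) α
    · exact univ_nonempty
  -- conjugate exponents
  have hpq : Real.HolderConjugate (1/α) (1/(1-α)) := by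
    rw [Real.holderConjugate_iff]; constructor
    · rw [one_lt_div hα0]; linarith
    · field_simp; ring
  -- key Hölder step: ∑ P^α ≤ S^α
  have hαρ : α * ρ = 1 - α := by
    rw [hα]; field_simp; ring
  have hkey : (∑ x, P x ^ α) ≤ S ^ α := by
    have holder := Real.inner_le_Lp_mul_Lq_of_nonneg (univ : Finset X)
      (f := fun x => (P x * (2 : ℝ) ^ (ρ * (L x : ℝ))) ^ α)
      (g := fun x => ((2:ℝ) ^ (-(L x : ℝ))) ^ (1-α)) hpq
      (fun i _ => (Real.rpow_pos_of_pos (hposx i) _).le)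
      (fun i _ => (Real.rpow_pos_of_pos (Real.rpow_pos_of_pos two_pos _) _).le)
    have hfg : ∀ x : X, (P x * (2 : ℝ) ^ (ρ * (L x : ℝ))) ^ α *
        ((2:ℝ) ^ (-(L x : ℝ))) ^ (1-α) = P x ^ α := by
      intro x
      rw [Real.mul_rpow (hP x).le (Real.rpow_pos_of_pos two_pos _).le,
        ← Real.rpow_mul (by norm_num : (0:ℝ) ≤ 2),
        ← Real.rpow_mul (by norm_num : (0:ℝ) ≤ 2),
        mul_assoc, ← Real.rpow_add two_pos]
      have hz : ρ * (L x : ℝ) * α + -(L x : ℝ) * (1 - α) = 0 := by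
        linear_combination (L x : ℝ) * hαρ
      rw [hz, Real.rpow_zero, mul_one]
    have hfp : ∀ x : X, ((P x * (2 : ℝ) ^ (ρ * (L x : ℝ))) ^ α) ^ (1/α)
        = P x * (2 : ℝ) ^ (ρ * (L x : ℝ)) := by
      intro x
      rw [← Real.rpow_mul (hposx x).le, mul_one_div, div_self hα0.ne', Real.rpow_one]
    have hgq : ∀ x : X, (((2:ℝ) ^ (-(L x : ℝ))) ^ (1-α)) ^ (1/(1-α))
        = (2:ℝ) ^ (-(L x : ℝ)) := by
      intro x
      rw [← Real.rpow_mul (Real.rpow_pos_of_pos two_pos _).le, mul_one_div,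
        div_self h1α.ne', Real.rpow_one]
    simp only [hfg, hfp, hgq] at holder
    calc (∑ x, P x ^ α) ≤ S ^ (1/(1/α)) * (∑ x, (2:ℝ) ^ (-(L x : ℝ))) ^ (1/(1/(1-α))) := by
          simpa [hS] using holder
      _ ≤ S ^ (1/(1/α)) * 1 := by
          apply mul_le_mul_of_nonneg_left _ (by positivity)
          apply Real.rpow_le_one (by positivity) hKraft (by positivity)
      _ = S ^ α := by rw [mul_one, one_div_one_div]
  -- take logs
  have hlog : Real.logb 2 (∑ x, P x ^ α) ≤ α * Real.logb 2 S := by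
    calc Real.logb 2 (∑ x, P x ^ α) ≤ Real.logb 2 (S ^ α) :=
          Real.logb_le_logb_of_le (by norm_num) hTpos hkey
      _ = α * Real.logb 2 S := by
          rw [Real.logb, Real.logb, Real.log_rpow hSpos]; ring
  have hcoef : (1/(1-α)) * α = 1/ρ := by
    rw [hα]; field_simp; rw [add_sub_cancel_left, div_self hρ.ne']
  calc (1 / (1 - α)) * Real.logb 2 (∑ x, P x ^ α)
      ≤ (1 / (1 - α)) * (α * Real.logb 2 S) := by
        apply mul_le_mul_of_nonneg_left hlog (by positivity)
    _ = (1/ρ) * Real.logb 2 S := by rw [← mul_assoc, hcoef]
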